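/- There is no stochastic model that is both local and Jarrett-complete whose predicted phenomenon equals the singlet phenomenon f_sing(A,B|a,b) = (1 − A·B·⟨a,b⟩)/4 over unit-vector settings a, b ∈ ℝ³. That is, quantum phenomena violate either locality or Jarrett-completeness. -/

import Mathlib

open MeasureTheory
open scoped RealInnerProductSpace

/-- Auxiliary planar vector constructor. -/
noncomputable def bellVec (x y : ℝ) : EuclideanSpace ℝ (Fin 3) :=
  (WithLp.equiv 2 _).symm ![x, y, 0]

lemma bell_integral_comb {Λ : Type*} [MeasurableSpace Λ] (μ : Measure Λ)
    (f1 f2 f3 f4 : Λ → ℝ) (h1 : Integrable f1 μ) (h2 : Integrable f2 μ)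
    (h3 : Integrable f3 μ) (h4 : Integrable f4 μ) :
    ∫ l, (f1 l - f2 l - f3 l + f4 l) ∂μ
      = (∫ l, f1 l ∂μ) - (∫ l, f2 l ∂μ) - (∫ l, f3 l ∂μ) + ∫ l, f4 l ∂μ := by
  rw [integral_add (show Integrable (fun l => f1 l - f2 l - f3 l) μ from (h1.sub h2).sub h3) h4,
    integral_sub (show Integrable (fun l => f1 l - f2 l) μ from h1.sub h2) h3,
    integral_sub h1 h2]

lemma bell_integral_comb' {Λ : Type*} [MeasurableSpace Λ] (μ : Measure Λ)
    (f1 f2 f3 f4 : Λ → ℝ) (h1 : Integrable f1 μ) (h2 : Integrable f2 μ)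
    (h3 : Integrable f3 μ) (h4 : Integrable f4 μ) :
    ∫ l, (f1 l + f2 l + f3 l - f4 l) ∂μ
      = (∫ l, f1 l ∂μ) + (∫ l, f2 l ∂μ) + (∫ l, f3 l ∂μ) - ∫ l, f4 l ∂μ := by
  rw [integral_sub (show Integrable (fun l => f1 l + f2 l + f3 l) μ from (h1.add h2).add h3) h4,
    integral_add (show Integrable (fun l => f1 l + f2 l) μ from h1.add h2) h3,
    integral_add h1 h2]

/-- **Bell's 1976 theorem in the form L&JC (via Jarrett's theorem):
quantum phenomena violate either locality or Jarrett-completeness.**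
No stochastic model `P(A,B|a,b,λ)` over unit-vector settings (nonnegative, summing to `1`,
measurable in `λ`) that is both local (the marginal `P(A|a,b,λ) = Σ_B P(A,B|a,b,λ)` does not
depend on `b` and `P(B|a,b,λ) = Σ_A P(A,B|a,b,λ)` does not depend on `a`) and Jarrett-complete
(`P(A,B|a,b,λ) = P(A|a,b,λ)·P(B|a,b,λ)`) has predicted phenomenon
`f(A,B|a,b) = ∫ P(A,B|a,b,λ) dμ(λ)` equal to the singlet phenomenon
`f_sing(A,B|a,b) = (1 − A·B·⟨a,b⟩)/4`. -/
theorem bell_1976_as_L_and_JC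
    {Λ : Type*} [MeasurableSpace Λ] (μ : Measure Λ) [IsProbabilityMeasure μ]
    (P : ℝ → ℝ → {v : EuclideanSpace ℝ (Fin 3) // ‖v‖ = 1} →
      {v : EuclideanSpace ℝ (Fin 3) // ‖v‖ = 1} → Λ → ℝ)
    (hP_nonneg : ∀ A B, (A = 1 ∨ A = -1) → (B = 1 ∨ B = -1) → ∀ a b l, 0 ≤ P A B a b l)
    (hP_sum : ∀ a b l,
      P 1 1 a b l + P 1 (-1) a b l + P (-1) 1 a b l + P (-1) (-1) a b l = 1)
    (hP_meas : ∀ A B, (A = 1 ∨ A = -1) → (B = 1 ∨ B = -1) → ∀ a b,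
      Measurable fun l => P A B a b l)
    (hlocA : ∀ A, (A = 1 ∨ A = -1) → ∀ a b b' l,
      P A 1 a b l + P A (-1) a b l = P A 1 a b' l + P A (-1) a b' l)
    (hlocB : ∀ B, (B = 1 ∨ B = -1) → ∀ a a' b l,
      P 1 B a b l + P (-1) B a b l = P 1 B a' b l + P (-1) B a' b l)
    (hJC : ∀ A B, (A = 1 ∨ A = -1) → (B = 1 ∨ B = -1) → ∀ a b l,
      P A B a b l
        = (P A 1 a b l + P A (-1) a b l) * (P 1 B a b l + P (-1) B a b l)) :
    ¬ ∀ A B, (A = 1 ∨ A = -1) → (B = 1 ∨ B = -1) →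
        ∀ (a b : {v : EuclideanSpace ℝ (Fin 3) // ‖v‖ = 1}),
          (∫ l, P A B a b l ∂μ)
            = (1 - A * B * ⟪(a : EuclideanSpace ℝ (Fin 3)), (b : EuclideanSpace ℝ (Fin 3))⟫) / 4 := by
  intro H
  have hone : ((1:ℝ) = 1 ∨ (1:ℝ) = -1) := Or.inl rfl
  have hmone : ((-1:ℝ) = 1 ∨ (-1:ℝ) = -1) := Or.inr rfl
  have hva : ‖bellVec 1 0‖ = 1 := by
    simp [bellVec, EuclideanSpace.norm_eq, Fin.sum_univ_three, WithLp.equiv_symm_apply, PiLp.toLp_apply]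
  have hva' : ‖bellVec 0 1‖ = 1 := by
    simp [bellVec, EuclideanSpace.norm_eq, Fin.sum_univ_three, WithLp.equiv_symm_apply, PiLp.toLp_apply]
  have hvb : ‖bellVec (-3/5) (-4/5)‖ = 1 := by
    simp [bellVec, EuclideanSpace.norm_eq, Fin.sum_univ_three, WithLp.equiv_symm_apply, PiLp.toLp_apply]
    norm_num
  have hvb' : ‖bellVec (-4/5) (3/5)‖ = 1 := by
    simp [bellVec, EuclideanSpace.norm_eq, Fin.sum_univ_three, WithLp.equiv_symm_apply, PiLp.toLp_apply]
    norm_num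
  set a : {v : EuclideanSpace ℝ (Fin 3) // ‖v‖ = 1} := ⟨bellVec 1 0, hva⟩ with ha_def
  set a' : {v : EuclideanSpace ℝ (Fin 3) // ‖v‖ = 1} := ⟨bellVec 0 1, hva'⟩ with ha'_def
  set b : {v : EuclideanSpace ℝ (Fin 3) // ‖v‖ = 1} := ⟨bellVec (-3/5) (-4/5), hvb⟩ with hb_def
  set b' : {v : EuclideanSpace ℝ (Fin 3) // ‖v‖ = 1} := ⟨bellVec (-4/5) (3/5), hvb'⟩ with hb'_def
  -- marginal-difference functions (reference setting = a)
  set g : {v : EuclideanSpace ℝ (Fin 3) // ‖v‖ = 1} → Λ → ℝ := fun x l =>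
    P 1 1 x a l + P 1 (-1) x a l - P (-1) 1 x a l - P (-1) (-1) x a l with hg_def
  set h : {v : EuclideanSpace ℝ (Fin 3) // ‖v‖ = 1} → Λ → ℝ := fun y l =>
    P 1 1 a y l + P (-1) 1 a y l - P 1 (-1) a y l - P (-1) (-1) a y l with hh_def
  -- the pointwise product identity from locality + JC
  have hkey : ∀ (x y : {v : EuclideanSpace ℝ (Fin 3) // ‖v‖ = 1}) (l : Λ),
      g x l * h y l
        = P 1 1 x y l - P 1 (-1) x y l - P (-1) 1 x y l + P (-1) (-1) x y l := by
    intro x y l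
    have hA1 := hlocA 1 hone x y a l
    have hAm := hlocA (-1) hmone x y a l
    have hB1 := hlocB 1 hone x a y l
    have hBm := hlocB (-1) hmone x a y l
    have e1 := hJC 1 1 hone hone x y l
    have e2 := hJC 1 (-1) hone hmone x y l
    have e3 := hJC (-1) 1 hmone hone x y l
    have e4 := hJC (-1) (-1) hmone hmone x y l
    have hgx : g x l = P 1 1 x y l + P 1 (-1) x y l - (P (-1) 1 x y l + P (-1) (-1) x y l) := by
      simp only [hg_def]; linarith
    have hhy : h y l = P 1 1 x y l + P (-1) 1 x y l - (P 1 (-1) x y l + P (-1) (-1) x y l) := by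
      simp only [hh_def]; linarith
    rw [hgx, hhy]
    linear_combination (-1 : ℝ) * e1 + e2 + e3 - e4
  -- bounds |g| ≤ 1, |h| ≤ 1
  have hgb : ∀ x l, -1 ≤ g x l ∧ g x l ≤ 1 := by
    intro x l
    have hs := hP_sum x a l
    have n1 := hP_nonneg 1 1 hone hone x a l
    have n2 := hP_nonneg 1 (-1) hone hmone x a l
    have n3 := hP_nonneg (-1) 1 hmone hone x a l
    have n4 := hP_nonneg (-1) (-1) hmone hmone x a l
    constructor <;> (simp only [hg_def]; linarith)
  have hhb : ∀ y l, -1 ≤ h y l ∧ h y l ≤ 1 := by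
    intro y l
    have hs := hP_sum a y l
    have n1 := hP_nonneg 1 1 hone hone a y l
    have n2 := hP_nonneg 1 (-1) hone hmone a y l
    have n3 := hP_nonneg (-1) 1 hmone hone a y l
    have n4 := hP_nonneg (-1) (-1) hmone hmone a y l
    constructor <;> (simp only [hh_def]; linarith)
  -- integrability of each P A B x y
  have hint : ∀ A B (hA : A = 1 ∨ A = -1) (hB : B = 1 ∨ B = -1) x y,
      Integrable (fun l => P A B x y l) μ := by
    intro A B hA hB x y
    refine Integrable.mono' (integrable_const (1:ℝ))
      ((hP_meas A B hA hB x y).aestronglyMeasurable) (ae_of_all _ fun l => ?_)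
    have hs := hP_sum x y l
    have n1 := hP_nonneg 1 1 hone hone x y l
    have n2 := hP_nonneg 1 (-1) hone hmone x y l
    have n3 := hP_nonneg (-1) 1 hmone hone x y l
    have n4 := hP_nonneg (-1) (-1) hmone hmone x y l
    have nAB := hP_nonneg A B hA hB x y l
    rw [Real.norm_eq_abs, abs_of_nonneg nAB]
    rcases hA with rfl | rfl <;> rcases hB with rfl | rfl <;> linarith
  have hintgh : ∀ x y, Integrable (fun l => g x l * h y l) μ := by
    intro x y
    have hfun : (fun l => g x l * h y l)
        = fun l => P 1 1 x y l - P 1 (-1) x y l - P (-1) 1 x y l + P (-1) (-1) x y l :=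
      funext fun l => hkey x y l
    rw [hfun]
    exact (((hint 1 1 hone hone x y).sub (hint 1 (-1) hone hmone x y)).sub
      (hint (-1) 1 hmone hone x y)).add (hint (-1) (-1) hmone hmone x y)
  -- correlator
  have hE : ∀ x y, (∫ l, g x l * h y l ∂μ)
      = -⟪(x : EuclideanSpace ℝ (Fin 3)), (y : EuclideanSpace ℝ (Fin 3))⟫ := by
    intro x y
    have hfun : (fun l => g x l * h y l)
        = fun l => P 1 1 x y l - P 1 (-1) x y l - P (-1) 1 x y l + P (-1) (-1) x y l :=
      funext fun l => hkey x y l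
    rw [hfun, bell_integral_comb μ _ _ _ _ (hint 1 1 hone hone x y)
      (hint 1 (-1) hone hmone x y) (hint (-1) 1 hmone hone x y)
      (hint (-1) (-1) hmone hmone x y),
      H 1 1 hone hone x y, H 1 (-1) hone hmone x y, H (-1) 1 hmone hone x y,
      H (-1) (-1) hmone hmone x y]
    ring
  -- CHSH pointwise bound
  have hCHSH : ∀ l : Λ,
      g a l * h b l + g a l * h b' l + g a' l * h b l - g a' l * h b' l ≤ 2 := by
    intro l
    obtain ⟨hx1, hx2⟩ := hgb a l
    obtain ⟨hy1, hy2⟩ := hgb a' l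
    obtain ⟨hu1, hu2⟩ := hhb b l
    obtain ⟨hv1, hv2⟩ := hhb b' l
    have h1 : g a l * (h b l + h b' l) ≤ |h b l + h b' l| := by
      calc g a l * (h b l + h b' l) ≤ |g a l * (h b l + h b' l)| := le_abs_self _
        _ = |g a l| * |h b l + h b' l| := abs_mul _ _
        _ ≤ 1 * |h b l + h b' l| :=
            mul_le_mul_of_nonneg_right (abs_le.2 ⟨hx1, hx2⟩) (abs_nonneg _)
        _ = |h b l + h b' l| := one_mul _
    have h2 : g a' l * (h b l - h b' l) ≤ |h b l - h b' l| := by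
      calc g a' l * (h b l - h b' l) ≤ |g a' l * (h b l - h b' l)| := le_abs_self _
        _ = |g a' l| * |h b l - h b' l| := abs_mul _ _
        _ ≤ 1 * |h b l - h b' l| :=
            mul_le_mul_of_nonneg_right (abs_le.2 ⟨hy1, hy2⟩) (abs_nonneg _)
        _ = |h b l - h b' l| := one_mul _
    have h3 : |h b l + h b' l| + |h b l - h b' l| ≤ 2 := by
      rcases abs_cases (h b l + h b' l) with ⟨e, _⟩ | ⟨e, _⟩ <;>
        rcases abs_cases (h b l - h b' l) with ⟨e', _⟩ | ⟨e', _⟩ <;> rw [e, e'] <;> linarith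
    nlinarith [h1, h2, h3]
  -- integrate the CHSH bound
  have hSle : (∫ l, (g a l * h b l + g a l * h b' l + g a' l * h b l - g a' l * h b' l) ∂μ)
      ≤ 2 := by
    have hInt : Integrable
        (fun l => g a l * h b l + g a l * h b' l + g a' l * h b l - g a' l * h b' l) μ :=
      (((hintgh a b).add (hintgh a b')).add (hintgh a' b)).sub (hintgh a' b')
    calc (∫ l, (g a l * h b l + g a l * h b' l + g a' l * h b l - g a' l * h b' l) ∂μ)
        ≤ ∫ _, (2:ℝ) ∂μ := integral_mono hInt (integrable_const 2) hCHSH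
      _ = 2 := by simp
  have hSval : (∫ l, (g a l * h b l + g a l * h b' l + g a' l * h b l - g a' l * h b' l) ∂μ)
      = 14/5 := by
    rw [bell_integral_comb' μ _ _ _ _ (hintgh a b) (hintgh a b') (hintgh a' b) (hintgh a' b'),
      hE a b, hE a b', hE a' b, hE a' b']
    have i1 : ⟪(a : EuclideanSpace ℝ (Fin 3)), (b : EuclideanSpace ℝ (Fin 3))⟫ = -3/5 := by
      simp [ha_def, hb_def, bellVec, PiLp.inner_apply, Fin.sum_univ_three,
        WithLp.equiv_symm_apply, PiLp.toLp_apply, RCLike.inner_apply]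
    have i2 : ⟪(a : EuclideanSpace ℝ (Fin 3)), (b' : EuclideanSpace ℝ (Fin 3))⟫ = -4/5 := by
      simp [ha_def, hb'_def, bellVec, PiLp.inner_apply, Fin.sum_univ_three,
        WithLp.equiv_symm_apply, PiLp.toLp_apply, RCLike.inner_apply]
    have i3 : ⟪(a' : EuclideanSpace ℝ (Fin 3)), (b : EuclideanSpace ℝ (Fin 3))⟫ = -4/5 := by
      simp [ha'_def, hb_def, bellVec, PiLp.inner_apply, Fin.sum_univ_three,
        WithLp.equiv_symm_apply, PiLp.toLp_apply, RCLike.inner_apply]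
    have i4 : ⟪(a' : EuclideanSpace ℝ (Fin 3)), (b' : EuclideanSpace ℝ (Fin 3))⟫ = 3/5 := by
      simp [ha'_def, hb'_def, bellVec, PiLp.inner_apply, Fin.sum_univ_three,
        WithLp.equiv_symm_apply, PiLp.toLp_apply, RCLike.inner_apply]
    rw [i1, i2, i3, i4]; norm_num
  rw [hSval] at hSle
  norm_num at hSle
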